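/- Let J be a finite set and let (Yᵗ)ₜ be a martingale with values in Δ(J) (the probability simplex on J) adapted to a filtration (Fₜ). Suppose there is c₁ > 0 such that for every t, conditionally on Fₜ, the probability that the support of Yᵗ⁺¹ is strictly contained in the support of Yᵗ is at least c₁ whenever the support of Yᵗ has more than one element. Then almost surely Yᵗ converges to a limit Y^∞ which is a Dirac measure (its support is a singleton). -/

import Mathlib

open MeasureTheory Filter

open Classical in
private lemma aux_count8 {J : Type*} [Finite J] (S : ℕ → Set J)
    (hdec : ∀ t, S (t + 1) ⊆ S t) (T : ℕ) :
    (∑ t ∈ Finset.range T, if S (t + 1) ⊂ S t then 1 else 0) + (S T).ncard ≤ (S 0).ncard := by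
  classical
  induction T with
  | zero => simp
  | succ T ih =>
    rw [Finset.sum_range_succ]
    have h : (if S (T + 1) ⊂ S T then 1 else 0) + (S (T + 1)).ncard ≤ (S T).ncard := by
      by_cases h : S (T + 1) ⊂ S T
      · have := Set.ncard_lt_ncard h (Set.toFinite _)
        simp only [h, if_true]
        omega
      · simpa [h] using Set.ncard_le_ncard (hdec T) (Set.toFinite _)
    omega

/-- a simplex-valued martingale whose support shrinks with
conditional probability at least `c₁ > 0` while it is not a singleton
converges a.s. to a Dirac measure. -/
theorem stmt_8 {Ω : Type*} {m : MeasurableSpace Ω} (μ : Measure Ω)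
    [IsProbabilityMeasure μ] (ℱ : Filtration ℕ m)
    {J : Type*} [Fintype J] [DecidableEq J] [Nonempty J]
    (Y : ℕ → Ω → J → ℝ)
    (hsimplex : ∀ t ω, (∀ j, 0 ≤ Y t ω j) ∧ ∑ j, Y t ω j = 1)
    (hmart : ∀ j, Martingale (fun t ω => Y t ω j) ℱ μ)
    (c₁ : ℝ) (hc₁ : 0 < c₁)
    (hshrink : ∀ t, ∀ᵐ ω ∂μ,
      1 < (Function.support (Y t ω)).ncard →
        c₁ ≤ (μ[Set.indicator {ω' | Function.support (Y (t + 1) ω') ⊂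
                Function.support (Y t ω')} (fun _ => (1 : ℝ)) | ℱ t]) ω) :
    ∀ᵐ ω ∂μ, ∃ j : J,
      Tendsto (fun t => Y t ω) atTop
        (nhds (fun i => if i = j then (1 : ℝ) else 0)) := by
  classical
  -- measurability of coordinates
  have hYm : ∀ t j, Measurable fun ω => Y t ω j := fun t j =>
    (((hmart j).stronglyAdapted t).measurable).mono (ℱ.le t) le_rfl
  have hE : ∀ t j, MeasurableSet {ω | Y t ω j = 0} := fun t j =>
    hYm t j (measurableSet_singleton 0)
  -- the shrink sets
  set D : ℕ → Set Ω := fun t => {ω' | Function.support (Y (t + 1) ω') ⊂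
      Function.support (Y t ω')} with hDdef
  have hD : ∀ t, MeasurableSet (D t) := by
    intro t
    have hset : D t =
        (⋂ j, ({ω | Y (t + 1) ω j = 0} ∪ {ω | Y t ω j = 0}ᶜ)) ∩
          (⋃ j, ({ω | Y t ω j = 0}ᶜ ∩ {ω | Y (t + 1) ω j = 0})) := by
      ext ω
      simp only [hDdef, Set.mem_setOf_eq, Set.ssubset_def, Set.mem_inter_iff,
        Set.mem_iInter, Set.mem_iUnion, Set.mem_union, Set.mem_compl_iff, Set.not_subset]
      constructor
      · rintro ⟨hsub, hns⟩
        obtain ⟨x, hx, hx'⟩ := hns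
        refine ⟨fun j => ?_, x, Function.mem_support.mp hx, Function.notMem_support.mp hx'⟩
        by_cases h : Y (t + 1) ω j = 0
        · exact Or.inl h
        · exact Or.inr (Function.mem_support.mp (hsub (Function.mem_support.mpr h)))
      · rintro ⟨hsub, x, hx1, hx2⟩
        constructor
        · intro k hk
          rcases hsub k with h | h
          · exact absurd h (Function.mem_support.mp hk)
          · exact Function.mem_support.mpr h
        · exact ⟨x, Function.mem_support.mpr hx1, Function.notMem_support.mpr hx2⟩
    rw [hset]
    exact ((MeasurableSet.iInter fun j => (hE (t + 1) j).union (hE t j).compl)).inter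
      (MeasurableSet.iUnion fun j => (hE t j).compl.inter (hE (t + 1) j))
  -- the "not yet a singleton" sets, measurable w.r.t. ℱ t
  set A : ℕ → Set Ω := fun t => {ω | 1 < (Function.support (Y t ω)).ncard} with hAdef
  have hA : ∀ t, MeasurableSet[ℱ t] (A t) := by
    intro t
    have hset : A t = ⋃ a, ⋃ b,
        (({ω | Y t ω a = 0}ᶜ ∩ {ω | Y t ω b = 0}ᶜ) ∩ {_ω | a ≠ b}) := by
      ext ω
      simp only [hAdef, Set.mem_setOf_eq, Set.mem_iUnion, Set.mem_inter_iff,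
        Set.mem_compl_iff]
      rw [Set.one_lt_ncard_iff (Set.toFinite _)]
      constructor
      · rintro ⟨a, b, ha, hb, hab⟩
        exact ⟨a, b, ⟨Function.mem_support.mp ha, Function.mem_support.mp hb⟩, hab⟩
      · rintro ⟨a, b, ⟨ha, hb⟩, hab⟩
        exact ⟨a, b, Function.mem_support.mpr ha, Function.mem_support.mpr hb, hab⟩
    have hE' : ∀ j, MeasurableSet[ℱ t] {ω | Y t ω j = 0} := fun j =>
      ((hmart j).stronglyAdapted t).measurable (measurableSet_singleton 0)
    rw [hset]
    exact MeasurableSet.iUnion fun a => MeasurableSet.iUnion fun b =>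
      (((hE' a).compl.inter (hE' b).compl)).inter (MeasurableSet.const _)
  -- supports a.s. decrease
  have hdec_ae : ∀ᵐ ω ∂μ, ∀ t,
      Function.support (Y (t + 1) ω) ⊆ Function.support (Y t ω) := by
    rw [ae_all_iff]
    intro t
    have hj : ∀ j : J, ∀ᵐ ω ∂μ, Y t ω j = 0 → Y (t + 1) ω j = 0 := by
      intro j
      have hAm : MeasurableSet[ℱ t] {ω | Y t ω j = 0} :=
        ((hmart j).stronglyAdapted t).measurable (measurableSet_singleton 0)
      have hgint : Integrable (fun ω => Y (t + 1) ω j) μ := (hmart j).integrable (t + 1)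
      have hce : μ[(fun ω => Y (t + 1) ω j) | ℱ t] =ᵐ[μ] fun ω => Y t ω j :=
        (hmart j).condExp_ae_eq (Nat.le_succ t)
      have hint : ∫ ω in {ω | Y t ω j = 0}, Y (t + 1) ω j ∂μ = 0 := by
        rw [← setIntegral_condExp (ℱ.le t) hgint hAm]
        rw [setIntegral_congr_ae (ℱ.le t _ hAm) (hce.mono fun ω h _ => h)]
        rw [setIntegral_congr_fun (ℱ.le t _ hAm) (fun ω hω => hω)]
        simp
      have hnn : 0 ≤ᵐ[μ.restrict {ω | Y t ω j = 0}] fun ω => Y (t + 1) ω j :=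
        Filter.Eventually.of_forall fun ω => (hsimplex (t + 1) ω).1 j
      have h0 := (setIntegral_eq_zero_iff_of_nonneg_ae hnn hgint.integrableOn).mp hint
      have h0' := (ae_restrict_iff' (ℱ.le t _ hAm)).mp h0
      exact h0'.mono fun ω h hf => h hf
    filter_upwards [ae_all_iff.mpr hj] with ω hω k hk h0
    exact hk (hω k h0)
  -- the indicator functions
  set g : ℕ → Ω → ℝ := fun t => (D t).indicator (fun _ => (1 : ℝ)) with hgdef
  have hgint : ∀ t, Integrable (g t) μ := fun t => (integrable_const 1).indicator (hD t)
  have hgnn : ∀ t, 0 ≤ᵐ[μ] g t := fun t => Filter.Eventually.of_forall fun ω =>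
    Set.indicator_nonneg (fun _ _ => zero_le_one) ω
  -- key bound: c₁ μ(A t) ≤ E[g t]
  have key : ∀ t, c₁ * (μ (A t)).toReal ≤ ∫ ω, g t ω ∂μ := by
    intro t
    have h2 : (A t).indicator (fun _ => c₁) ≤ᵐ[μ] μ[g t | ℱ t] := by
      filter_upwards [hshrink t, condExp_nonneg (m := ℱ t) (hgnn t)] with ω h1 hpos
      by_cases hω : ω ∈ A t
      · rw [Set.indicator_of_mem hω]
        exact h1 hω
      · rw [Set.indicator_of_notMem hω]
        exact hpos
    calc c₁ * (μ (A t)).toReal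
        = ∫ ω, (A t).indicator (fun _ => c₁) ω ∂μ := by
          rw [integral_indicator_const c₁ (ℱ.le t _ (hA t))]
          simp [mul_comm, Measure.real]
      _ ≤ ∫ ω, (μ[g t | ℱ t]) ω ∂μ :=
          integral_mono_ae ((integrable_const c₁).indicator (ℱ.le t _ (hA t)))
            integrable_condExp h2
      _ = ∫ ω, g t ω ∂μ := integral_condExp (ℱ.le t)
  -- partial sums are bounded
  have hpartial : ∀ T, c₁ * ∑ t ∈ Finset.range T, (μ (A t)).toReal ≤ Fintype.card J := by
    intro T
    have hb : ∀ᵐ ω ∂μ, ∑ t ∈ Finset.range T, g t ω ≤ (Fintype.card J : ℝ) := by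
      filter_upwards [hdec_ae] with ω hω
      have hnat := aux_count8 (fun t => Function.support (Y t ω)) hω T
      have hle : (Function.support (Y 0 ω)).ncard ≤ Fintype.card J := by
        simpa [Set.ncard_univ] using
          Set.ncard_le_ncard (Set.subset_univ (Function.support (Y 0 ω))) Set.finite_univ
      have heq : ∑ t ∈ Finset.range T, g t ω =
          ((∑ t ∈ Finset.range T,
            if Function.support (Y (t + 1) ω) ⊂ Function.support (Y t ω) then 1 else 0 : ℕ) : ℝ) := by
        push_cast
        refine Finset.sum_congr rfl fun t _ => ?_
        simp [hgdef, Set.indicator_apply, hDdef, Set.mem_setOf_eq]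
      rw [heq]
      exact_mod_cast (by omega :
        (∑ t ∈ Finset.range T,
          if Function.support (Y (t + 1) ω) ⊂ Function.support (Y t ω) then 1 else 0) ≤
          Fintype.card J)
    have hsum : ∑ t ∈ Finset.range T, ∫ ω, g t ω ∂μ ≤ (Fintype.card J : ℝ) := by
      rw [← integral_finset_sum _ fun t _ => hgint t]
      calc ∫ ω, ∑ t ∈ Finset.range T, g t ω ∂μ
          ≤ ∫ _ω, (Fintype.card J : ℝ) ∂μ :=
            integral_mono_ae (integrable_finset_sum _ fun t _ => hgint t)
              (integrable_const _) hb
        _ = (Fintype.card J : ℝ) := by simp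
    calc c₁ * ∑ t ∈ Finset.range T, (μ (A t)).toReal
        = ∑ t ∈ Finset.range T, c₁ * (μ (A t)).toReal := by rw [Finset.mul_sum]
      _ ≤ ∑ t ∈ Finset.range T, ∫ ω, g t ω ∂μ := Finset.sum_le_sum fun t _ => key t
      _ ≤ (Fintype.card J : ℝ) := hsum
  -- μ(A t) → 0
  have hdiv : ∀ T, ∑ t ∈ Finset.range T, (μ (A t)).toReal ≤ (Fintype.card J : ℝ) / c₁ := by
    intro T
    rw [le_div_iff₀ hc₁]
    linarith [hpartial T]
  have hsummable : Summable fun t => (μ (A t)).toReal :=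
    summable_of_sum_range_le (fun t => ENNReal.toReal_nonneg) hdiv
  have htend := hsummable.tendsto_atTop_zero
  -- the bad event is null
  have hBnull : μ {ω | ∀ t, 1 < (Function.support (Y t ω)).ncard} = 0 := by
    set B := {ω | ∀ t, 1 < (Function.support (Y t ω)).ncard}
    have hle : ∀ t, (μ B).toReal ≤ (μ (A t)).toReal := fun t =>
      ENNReal.toReal_mono (measure_ne_top μ _) (measure_mono fun ω hω => hω t)
    have h0 : (μ B).toReal ≤ 0 := ge_of_tendsto' htend hle
    have h0' : (μ B).toReal = 0 := le_antisymm h0 ENNReal.toReal_nonneg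
    exact ((ENNReal.toReal_eq_zero_iff _).mp h0').resolve_right (measure_ne_top μ _)
  have hB : ∀ᵐ ω ∂μ, ∃ t, (Function.support (Y t ω)).ncard ≤ 1 := by
    rw [ae_iff]
    have : {ω | ¬ ∃ t, (Function.support (Y t ω)).ncard ≤ 1} =
        {ω | ∀ t, 1 < (Function.support (Y t ω)).ncard} := by
      ext ω; simp only [Set.mem_setOf_eq, not_exists, not_le]
    rw [this]
    exact hBnull
  -- conclusion
  filter_upwards [hdec_ae, hB] with ω hω hsing
  obtain ⟨t₀, ht₀⟩ := hsing
  have hne : ∀ t, (Function.support (Y t ω)).Nonempty := by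
    intro t
    rw [Function.support_nonempty_iff]
    intro h
    have := (hsimplex t ω).2
    rw [h] at this
    simp at this
  have hone : (Function.support (Y t₀ ω)).ncard = 1 :=
    le_antisymm ht₀ ((Set.ncard_pos (Set.toFinite _)).mpr (hne t₀))
  obtain ⟨j, hj⟩ := Set.ncard_eq_one.mp hone
  have hmono : ∀ s, Function.support (Y (t₀ + s) ω) ⊆ {j} := by
    intro s
    induction s with
    | zero => exact hj ▸ subset_rfl
    | succ s ih => exact (hω (t₀ + s)).trans ih
  have heq : ∀ s, t₀ ≤ s → Y s ω = fun i => if i = j then (1 : ℝ) else 0 := by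
    intro s hs
    obtain ⟨k, rfl⟩ := le_iff_exists_add.mp hs
    have hzero : ∀ i, i ≠ j → Y (t₀ + k) ω i = 0 := by
      intro i hi
      by_contra h
      exact hi (hmono k (Function.mem_support.mpr h))
    have hj1 : Y (t₀ + k) ω j = 1 := by
      have hsum := (hsimplex (t₀ + k) ω).2
      rwa [Finset.sum_eq_single j (fun i _ hi => hzero i hi)
        (fun h => absurd (Finset.mem_univ j) h)] at hsum
    funext i
    by_cases h : i = j
    · simp [h, hj1]
    · simp [h, hzero i h]
  refine ⟨j, Tendsto.congr' ?_ tendsto_const_nhds⟩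
  exact eventually_atTop.mpr ⟨t₀, fun s hs => (heq s hs).symm⟩
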